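/- For every object x of C and every functor F in Fct(C, A), the composite natural transformation i_x(κ_x(F)) : κ_x(F) → τ_x(κ_x(F)) is zero; consequently the canonical kernel inclusion κ_x(κ_x(F)) → κ_x(F) is an isomorphism, so that the natural inclusion κ_x ∘ κ_x ↪ κ_x is a natural isomorphism of endofunctors of Fct(C, A). -/

import Mathlib

open CategoryTheory CategoryTheory.Limits CategoryTheory.MonoidalCategory

variable {C : Type*} [Category C] [MonoidalCategory C]
variable {A : Type*} [Category A] [Abelian A]

/-- The translation endofunctor `τ_x` of `Fct(C, A)`: precomposition with `x ⊗ -`. -/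
noncomputable def tauF (A : Type*) [Category A] (x : C) : (C ⥤ A) ⥤ (C ⥤ A) :=
  (Functor.whiskeringLeft C C A).obj (tensorLeft x)

/-- The component `i_x(F) : F ⟶ τ_x F`, whose component at `c` is
`F` applied to `c ≅ 𝟙 ⊗ c ⟶ x ⊗ c`. -/
def iApp (hI : IsInitial (𝟙_ C)) (x : C) (F : C ⥤ A) : F ⟶ tensorLeft x ⋙ F where
  app c := F.map ((λ_ c).inv ≫ hI.to x ▷ c)
  naturality c c' f := by
    dsimp
    rw [← F.map_comp, ← F.map_comp]
    congr 1
    rw [leftUnitor_inv_naturality_assoc, whisker_exchange, Category.assoc]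

/-- The natural transformation `i_x : Id ⟶ τ_x` of endofunctors of `Fct(C, A)`. -/
noncomputable def iNT (hI : IsInitial (𝟙_ C)) (x : C) :
    𝟭 (C ⥤ A) ⟶ tauF A x where
  app F := iApp hI x F
  naturality F G η := by
    ext c
    exact (η.naturality _).symm

/-- The evanescence endofunctor `κ_x = ker(i_x)` of `Fct(C, A)`. -/
noncomputable def kappaF (hI : IsInitial (𝟙_ C)) (x : C) : (C ⥤ A) ⥤ (C ⥤ A) :=
  kernel (iNT (A := A) hI x)

/-- The difference endofunctor `δ_x = coker(i_x)` of `Fct(C, A)`. -/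
noncomputable def deltaF (hI : IsInitial (𝟙_ C)) (x : C) : (C ⥤ A) ⥤ (C ⥤ A) :=
  cokernel (iNT (A := A) hI x)

/-- `i_x(κ_x F) = 0`, hence the canonical inclusion `κ_x(κ_x F) → κ_x F` is an
isomorphism, and the natural inclusion `κ_x ∘ κ_x ↪ κ_x` is a natural isomorphism. -/
theorem kappa_kappa_iso (hI : IsInitial (𝟙_ C)) (x : C) :
    (∀ F : C ⥤ A, (iNT hI x).app ((kappaF hI x).obj F) = 0) ∧
    (∀ F : C ⥤ A, IsIso ((kernel.ι (iNT (A := A) hI x)).app ((kappaF hI x).obj F))) ∧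
    IsIso (Functor.whiskerLeft (kappaF (A := A) hI x) (kernel.ι (iNT hI x))) := by
  have h1 : ∀ F : C ⥤ A, (iNT hI x).app ((kappaF hI x).obj F) = 0 := by
    intro F
    set ι := kernel.ι (iNT (A := A) hI x) with hι
    have hmono : Mono ι := inferInstance
    have hmonoF : Mono (ι.app F) := inferInstance
    have hmonoτ : Mono ((tauF A x).map (ι.app F)) := by
      rw [NatTrans.mono_iff_mono_app]
      intro c
      exact inferInstanceAs (Mono ((ι.app F).app (x ⊗ c)))
    have hnat := (iNT (A := A) hI x).naturality (ι.app F)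
    have hz : ι.app F ≫ (iNT hI x).app F = 0 := by
      have := kernel.condition (iNT (A := A) hI x)
      exact congrArg (fun η => η.app F) this
    simp only [Functor.id_map, Functor.id_obj] at hnat
    rw [hz] at hnat
    exact hmonoτ.right_cancellation _ _ (hnat.symm.trans zero_comp.symm)
  have h2 : ∀ F : C ⥤ A, IsIso ((kernel.ι (iNT (A := A) hI x)).app ((kappaF hI x).obj F)) := by
    intro F
    set G' := (kappaF hI x).obj F
    have h0 : ((evaluation (C ⥤ A) (C ⥤ A)).obj G').map (iNT (A := A) hI x) = 0 := h1 F
    have hcomp := kernelComparison_comp_ι (iNT (A := A) hI x)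
      ((evaluation (C ⥤ A) (C ⥤ A)).obj G')
    set m := ((evaluation (C ⥤ A) (C ⥤ A)).obj G').map (iNT (A := A) hI x) with hm
    have hlift : (𝟙 G') ≫ m = 0 := by rw [h0, Category.id_comp]
    have hsec : kernel.lift m (𝟙 G') hlift ≫ kernel.ι m = 𝟙 G' := kernel.lift_ι _ _ _
    have : IsIso (kernel.ι m) :=
      ⟨kernel.lift m (𝟙 G') hlift, by
        constructor
        · rw [← cancel_mono (kernel.ι m), Category.assoc, hsec, Category.id_comp]
          exact Category.comp_id _
        · exact hsec⟩
    have : IsIso (kernelComparison (iNT (A := A) hI x)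
        ((evaluation (C ⥤ A) (C ⥤ A)).obj G') ≫
        kernel.ι m) := inferInstance
    rw [hcomp] at this
    exact this
  refine ⟨h1, h2, ?_⟩
  have : ∀ F : C ⥤ A,
      IsIso ((Functor.whiskerLeft (kappaF (A := A) hI x) (kernel.ι (iNT hI x))).app F) :=
    fun F => h2 F
  exact NatIso.isIso_of_isIso_app _
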